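/- Let p, q ≥ 2 be relatively prime integers. Then F_{p,q} preserves the uniform Bernoulli measure μ on A_{pq}^ℤ, i.e. μ(F_{p,q}^{-1}(S)) = μ(S) for every Borel set S ⊆ A_{pq}^ℤ. -/

import Mathlib

open MeasureTheory

/-- The local rule multiplying by `p` in base `pq`: writing `x = x₁q + x₀` with
`x₀ ∈ {0,…,q-1}`, `x₁ ∈ {0,…,p-1}`, we have `g p q x y = x₀p + y₁`. -/
def g (p q x y : ℕ) : ℕ := x % q * p + y / q

/-- The cellular automaton `G_{p,q}` on configurations. -/
def Gca (p q : ℕ) (c : ℤ → ℕ) : ℤ → ℕ := fun i => g p q (c i) (c (i + 1))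

/-- The cellular automaton `F_{p,q} = σ⁻¹ ∘ G_{p,q} ∘ G_{p,q}`, where `σ` is the left
shift `σ(c)(i) = c(i+1)`. -/
def Fca (p q : ℕ) (c : ℤ → ℕ) : ℤ → ℕ := fun i => Gca p q (Gca p q c) (i - 1)

/-- The cylinder `cyl(w,i) = {c : c(i)c(i+1)…c(i+|w|-1) = w}`. -/
def cyl (w : List ℕ) (i : ℤ) : Set (ℤ → ℕ) :=
  {c | ∀ j : Fin w.length, c (i + (j : ℕ)) = w.get j}

lemma measurableSet_cyl (w : List ℕ) (i : ℤ) : MeasurableSet (cyl w i) := by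
  have : cyl w i = ⋂ j : Fin w.length, (fun c : ℤ → ℕ => c (i + (j : ℕ))) ⁻¹' {w.get j} := by
    ext c; simp [cyl, Set.mem_iInter]
  rw [this]
  exact MeasurableSet.iInter fun j => (measurable_pi_apply _) (measurableSet_singleton _)

lemma measurable_Gca (p q : ℕ) : Measurable (Gca p q) := by
  rw [measurable_pi_iff]
  intro i
  have h1 : Measurable fun c : ℤ → ℕ => (c i, c (i+1)) :=
    Measurable.prodMk (measurable_pi_apply i) (measurable_pi_apply (i+1))
  exact (measurable_of_countable (fun m : ℕ × ℕ => g p q m.1 m.2)).comp h1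

def shiftInv (c : ℤ → ℕ) : ℤ → ℕ := fun i => c (i - 1)

lemma measurable_shiftInv : Measurable shiftInv := by
  rw [measurable_pi_iff]; exact fun i => measurable_pi_apply (i - 1)

lemma mem_cyl (w : List ℕ) (i : ℤ) (c : ℤ → ℕ) :
    c ∈ cyl w i ↔ ∀ k : ℕ, k < w.length → c (i + k) = w.getD k 0 := by
  constructor
  · intro h k hk
    have := h ⟨k, hk⟩
    simpa [List.getD_eq_getElem?_getD, List.getElem?_eq_getElem hk] using this
  · intro h j
    have := h j.1 j.2
    simpa [List.getD_eq_getElem?_getD, List.getElem?_eq_getElem j.2] using this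

lemma mem_cyl' (w : List ℕ) (i : ℤ) (c : ℤ → ℕ) :
    c ∈ cyl w i ↔ ∀ j : ℤ, i ≤ j → j < i + w.length → c j = w.getD (j - i).toNat 0 := by
  rw [mem_cyl]
  constructor
  · intro h j hj1 hj2
    have hk : (j - i).toNat < w.length := by omega
    have := h (j - i).toNat hk
    rwa [show i + ((j - i).toNat : ℤ) = j by omega] at this
  · intro h k hk
    have := h (i + k) (by omega) (by omega)
    rwa [show (i + k - i).toNat = k by omega] at this

/-- The π-system of cylinders whose window contains position 0. -/
def Cfam : Set (Set (ℤ → ℕ)) :=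
  {S | ∃ (w : List ℕ) (i : ℤ), w ≠ [] ∧ i ≤ 0 ∧ 0 < i + w.length ∧ S = cyl w i}

lemma isPiSystem_Cfam : IsPiSystem Cfam := by
  rintro S ⟨w, i, hw, hi, hiw, rfl⟩ T ⟨w', i', hw', hi', hiw', rfl⟩ hne
  obtain ⟨c, hcS, hcT⟩ := hne
  set a : ℤ := min i i' with ha
  set b : ℤ := max (i + w.length) (i' + w'.length) with hb
  have hab : a < b := by
    have h1 : 0 < (w.length : ℤ) := by
      have := List.length_pos_iff.mpr hw; exact_mod_cast this
    omega
  set L : ℕ := (b - a).toNat with hL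
  have hLpos : 0 < L := by omega
  set u : List ℕ := List.ofFn (fun k : Fin L => c (a + k)) with hu
  have hulen : u.length = L := by simp [hu]
  have hval : ∀ k : ℕ, k < L → u.getD k 0 = c (a + k) := by
    intro k hk
    rw [hu, List.getD_eq_getElem?_getD, List.getElem?_eq_getElem (by simpa using hk)]
    simp
  have key : cyl u a = cyl w i ∩ cyl w' i' := by
    ext c'
    rw [Set.mem_inter_iff, mem_cyl' u, mem_cyl' w, mem_cyl' w']
    rw [mem_cyl' w] at hcS
    rw [mem_cyl' w'] at hcT
    have hcover : ∀ j : ℤ, a ≤ j → j < b →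
        (i ≤ j ∧ j < i + w.length) ∨ (i' ≤ j ∧ j < i' + w'.length) := by
      intro j hj1 hj2; omega
    constructor
    · intro h
      have hagree : ∀ j : ℤ, a ≤ j → j < b → c' j = c j := by
        intro j hj1 hj2
        have := h j (by omega) (by rw [hulen]; omega)
        rw [this, hval (j - a).toNat (by omega)]
        congr 1; omega
      constructor
      · intro j hj1 hj2
        rw [hagree j (by omega) (by omega)]
        exact hcS j hj1 hj2
      · intro j hj1 hj2
        rw [hagree j (by omega) (by omega)]
        exact hcT j hj1 hj2
    · rintro ⟨h1, h2⟩ j hj1 hj2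
      rw [hulen] at hj2
      rw [hval (j - a).toNat (by omega)]
      have hja : a + ((j - a).toNat : ℤ) = j := by omega
      rw [hja]
      rcases hcover j (by omega) (by omega) with ⟨hl, hr⟩ | ⟨hl, hr⟩
      · rw [h1 j hl hr, hcS j hl hr]
      · rw [h2 j hl hr, hcT j hl hr]
  refine ⟨u, a, ?_, by omega, ?_, key.symm⟩
  · intro h; rw [h] at hulen; simp at hulen; omega
  · rw [hulen]; omega

lemma generate_eq : (MeasurableSpace.pi : MeasurableSpace (ℤ → ℕ)) =
    MeasurableSpace.generateFrom Cfam := by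
  have hsingle : ∀ (j : ℤ) (x : ℕ),
      MeasurableSet[MeasurableSpace.generateFrom Cfam] ((fun c : ℤ → ℕ => c j) ⁻¹' {x}) := by
    intro j x
    set i0 : ℤ := min j 0 with hi0
    set L : ℕ := (max j 0 - i0).toNat + 1 with hLdef
    have hjL : (j - i0).toNat < L := by omega
    have hset : ((fun c : ℤ → ℕ => c j) ⁻¹' {x}) =
        ⋃ v : {v : Fin L → ℕ // v ⟨(j - i0).toNat, hjL⟩ = x},
          cyl (List.ofFn v.1) i0 := by
      ext c
      simp only [Set.mem_preimage, Set.mem_singleton_iff, Set.mem_iUnion]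
      constructor
      · intro hc
        refine ⟨⟨fun k => c (i0 + k), ?_⟩, ?_⟩
        · simp only []
          rw [show i0 + (((j - i0).toNat : ℕ) : ℤ) = j by omega]
          exact hc
        · rw [mem_cyl]
          intro k hk
          simp only [List.length_ofFn] at hk
          rw [List.getD_eq_getElem?_getD, List.getElem?_eq_getElem (by simp only [List.length_ofFn]; omega),
            List.getElem_ofFn]
          rfl
      · rintro ⟨v, hv⟩
        rw [mem_cyl] at hv
        have := hv (j - i0).toNat (by simpa using hjL)
        rw [show i0 + (((j - i0).toNat : ℕ) : ℤ) = j by omega] at this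
        rw [this, List.getD_eq_getElem?_getD,
          List.getElem?_eq_getElem (by simpa using hjL), List.getElem_ofFn]
        exact v.2
    rw [hset]
    refine MeasurableSet.iUnion fun v => ?_
    apply MeasurableSpace.measurableSet_generateFrom
    refine ⟨List.ofFn v.1, i0, ?_, by omega, ?_, rfl⟩
    · have hlen : (List.ofFn v.1).length = L := by simp [hLdef]
      intro hnil
      rw [hnil] at hlen
      simp at hlen
    · simp only [List.length_ofFn]; omega
  apply le_antisymm
  · rw [MeasurableSpace.pi]
    refine iSup_le fun j => ?_
    rintro s ⟨t, -, rfl⟩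
    have ht : ((fun c : ℤ → ℕ => c j) ⁻¹' t) =
        ⋃ x ∈ t, ((fun c : ℤ → ℕ => c j) ⁻¹' {x}) := by
      ext c; simp
    rw [ht]
    exact MeasurableSet.biUnion t.to_countable fun x _ => hsingle j x
  · apply MeasurableSpace.generateFrom_le
    rintro S ⟨w, i, _, _, _, rfl⟩
    exact measurableSet_cyl w i

lemma cyl_singleton (j : ℤ) (y : ℕ) : cyl [y] j = {c : ℤ → ℕ | c j = y} := by
  ext c
  rw [mem_cyl]
  constructor
  · intro h
    have := h 0 (by norm_num)
    simpa using this
  · intro h k hk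
    have hk0 : k = 0 := by simpa using hk
    subst hk0
    simpa using h

section Measures

variable {p q : ℕ} (hp : 2 ≤ p) (hq : 2 ≤ q)
variable {μ : Measure (ℤ → ℕ)} [IsProbabilityMeasure μ]
variable (hμ : ∀ (w : List ℕ) (i : ℤ), w ≠ [] → (∀ x ∈ w, x < p * q) →
      μ (cyl w i) = (((p * q : ℕ) : ENNReal))⁻¹ ^ w.length)

include hp hq hμ

lemma single_null (j : ℤ) (x : ℕ) (hx : p * q ≤ x) : μ {c : ℤ → ℕ | c j = x} = 0 := by
  set U : Set (ℤ → ℕ) := ⋃ y ∈ Finset.range (p * q), cyl [y] j with hUdef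
  have hdisj : (↑(Finset.range (p * q)) : Set ℕ).PairwiseDisjoint (fun y => cyl [y] j) := by
    intro y _ y' _ hne
    rw [Function.onFun, Set.disjoint_left]
    intro c hc hc'
    rw [cyl_singleton] at hc hc'
    exact hne (hc ▸ hc')
  have hUmeas : MeasurableSet U :=
    Finset.measurableSet_biUnion _ fun y _ => measurableSet_cyl _ _
  have hU1 : μ U = 1 := by
    rw [hUdef, measure_biUnion_finset hdisj fun y _ => measurableSet_cyl _ _]
    have hval : ∀ y ∈ Finset.range (p * q), μ (cyl [y] j) = ((p * q : ℕ) : ENNReal)⁻¹ := by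
      intro y hy
      rw [hμ [y] j (by simp) (by simpa using Finset.mem_range.mp hy)]
      simp
    rw [Finset.sum_congr rfl hval, Finset.sum_const, Finset.card_range, nsmul_eq_mul]
    exact ENNReal.mul_inv_cancel (by positivity) (ENNReal.natCast_ne_top _)
  have hcompl : μ Uᶜ = 0 := (prob_compl_eq_zero_iff hUmeas).mpr hU1
  refine measure_mono_null ?_ hcompl
  intro c hc hcU
  simp only [hUdef, Set.mem_iUnion, Finset.mem_coe] at hcU
  obtain ⟨y, hy, hcy⟩ := hcU
  rw [cyl_singleton] at hcy
  simp only [Set.mem_setOf_eq] at hc hcy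
  simp only [Finset.mem_range] at hy
  omega

lemma ge_null (j : ℤ) : μ {c : ℤ → ℕ | p * q ≤ c j} = 0 := by
  refine measure_mono_null (t := ⋃ x : ℕ, {c : ℤ → ℕ | c j = p * q + x}) ?_ ?_
  · intro c hc
    rw [Set.mem_setOf_eq] at hc
    exact Set.mem_iUnion.mpr ⟨c j - p * q, by simp only [Set.mem_setOf_eq]; omega⟩
  · exact measure_iUnion_null fun x => single_null hp hq hμ j _ (by omega)

lemma bad_null : μ {c : ℤ → ℕ | ∃ j : ℤ, p * q ≤ c j} = 0 := by
  refine measure_mono_null (t := ⋃ j : ℤ, {c : ℤ → ℕ | p * q ≤ c j}) ?_ ?_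
  · intro c hc
    obtain ⟨j, hj⟩ := hc
    exact Set.mem_iUnion.mpr ⟨j, hj⟩
  · exact measure_iUnion_null fun j => ge_null hp hq hμ j

lemma mu_cyl_val (w : List ℕ) (i : ℤ) (hw : w ≠ []) :
    μ (cyl w i) = if ∀ x ∈ w, x < p * q then (((p * q : ℕ) : ENNReal))⁻¹ ^ w.length
      else 0 := by
  split_ifs with h
  · exact hμ w i hw h
  · push_neg at h
    obtain ⟨x, hxw, hx⟩ := h
    obtain ⟨k, hk, hkx⟩ := List.getElem_of_mem hxw
    refine measure_mono_null ?_ (single_null hp hq hμ (i + k) x hx)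
    intro c hc
    rw [mem_cyl] at hc
    have := hc k hk
    rw [Set.mem_setOf_eq, this, List.getD_eq_getElem?_getD, List.getElem?_eq_getElem hk]
    simpa using hkx.symm ▸ rfl

end Measures

/-- The preimage words of `u` under `Gca`, parameterized by `a < p`, `b < q`. -/
def vword (p q : ℕ) (u : List ℕ) (a b : ℕ) : List ℕ :=
  List.ofFn (fun k : Fin (u.length + 1) =>
    (if k.1 = 0 then a else u.getD (k.1 - 1) 0 % p) * q +
    (if k.1 = u.length then b else u.getD k.1 0 / p))

lemma vword_length (p q : ℕ) (u : List ℕ) (a b : ℕ) :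
    (vword p q u a b).length = u.length + 1 := by simp [vword]

lemma vword_getD (p q : ℕ) (u : List ℕ) (a b : ℕ) (k : ℕ) (hk : k < u.length + 1) :
    (vword p q u a b).getD k 0 =
    (if k = 0 then a else u.getD (k - 1) 0 % p) * q +
    (if k = u.length then b else u.getD k 0 / p) := by
  rw [vword, List.getD_eq_getElem?_getD, List.getElem?_eq_getElem (by simpa using hk),
    List.getElem_ofFn]
  rfl

lemma decompq {q : ℕ} (hq0 : 0 < q) (A B : ℕ) (hB : B < q) :
    (A * q + B) % q = B ∧ (A * q + B) / q = A := by
  constructor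
  · rw [add_comm, Nat.add_mul_mod_self_right, Nat.mod_eq_of_lt hB]
  · rw [add_comm, Nat.add_mul_div_right _ _ hq0, Nat.div_eq_of_lt hB, zero_add]

lemma getD_lt {p q : ℕ} {u : List ℕ} (hud : ∀ x ∈ u, x < p * q) {k : ℕ}
    (hk : k < u.length) : u.getD k 0 < p * q := by
  rw [List.getD_eq_getElem?_getD, List.getElem?_eq_getElem hk]
  exact hud _ (List.getElem_mem hk)

lemma g_lt {p q : ℕ} (hp0 : 0 < p) (hq0 : 0 < q) (x y : ℕ) (hy : y < p * q) :
    g p q x y < p * q := by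
  have h1 : x % q < q := Nat.mod_lt x hq0
  have h2 : y / q < p := (Nat.div_lt_iff_lt_mul hq0).mpr (by rwa [mul_comm] at hy ⊢)
  calc g p q x y = x % q * p + y / q := rfl
    _ < x % q * p + p := by omega
    _ = (x % q + 1) * p := by ring
    _ ≤ q * p := Nat.mul_le_mul_right p (by omega)
    _ = p * q := mul_comm q p

lemma div_lt_p {p q y : ℕ} (hq0 : 0 < q) (hy : y < p * q) : y / q < p := by
  rw [Nat.div_lt_iff_lt_mul hq0]
  rwa [mul_comm] at hy ⊢

section Core

variable {p q : ℕ} (hp : 2 ≤ p) (hq : 2 ≤ q)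

include hp hq

lemma vword_digits {u : List ℕ} (hud : ∀ x ∈ u, x < p * q) {a b : ℕ}
    (ha : a < p) (hb : b < q) : ∀ x ∈ vword p q u a b, x < p * q := by
  intro x hx
  rw [vword, List.mem_ofFn] at hx
  obtain ⟨k, rfl⟩ := hx
  have hA : (if k.1 = 0 then a else u.getD (k.1 - 1) 0 % p) < p := by
    split
    · exact ha
    · exact Nat.mod_lt _ (by omega)
  have hB : (if k.1 = u.length then b else u.getD k.1 0 / p) < q := by
    split
    · exact hb
    · next h =>
      have hk : k.1 < u.length := by omega
      exact div_lt_p (by omega) (Nat.lt_of_lt_of_eq (getD_lt hud hk) (mul_comm p q))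
  calc (if k.1 = 0 then a else u.getD (k.1 - 1) 0 % p) * q +
        (if k.1 = u.length then b else u.getD k.1 0 / p)
      < (if k.1 = 0 then a else u.getD (k.1 - 1) 0 % p) * q + q := by omega
    _ = ((if k.1 = 0 then a else u.getD (k.1 - 1) 0 % p) + 1) * q := by ring
    _ ≤ p * q := Nat.mul_le_mul_right q (by omega)

lemma cyl_vword_subset {u : List ℕ} (hu : u ≠ []) (hud : ∀ x ∈ u, x < p * q) (i : ℤ)
    {a b : ℕ} (ha : a < p) (hb : b < q) :
    cyl (vword p q u a b) i ⊆ Gca p q ⁻¹' cyl u i := by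
  intro c hc
  rw [mem_cyl, vword_length] at hc
  rw [Set.mem_preimage, mem_cyl]
  intro k hk
  have h1 := hc k (by omega)
  have h2 := hc (k + 1) (by omega)
  rw [vword_getD p q u a b k (by omega)] at h1
  rw [vword_getD p q u a b (k + 1) (by omega)] at h2
  have hBk : (if k = u.length then b else u.getD k 0 / p) < q := by
    rw [if_neg (Nat.ne_of_lt hk)]
    exact div_lt_p (by omega) (Nat.lt_of_lt_of_eq (getD_lt hud hk) (mul_comm p q))
  have hBk1 : (if k + 1 = u.length then b else u.getD (k + 1) 0 / p) < q := by
    split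
    · exact hb
    · next h =>
      exact div_lt_p (by omega) (Nat.lt_of_lt_of_eq (getD_lt hud (by omega)) (mul_comm p q))
  have e1 : Gca p q c (i + k) = g p q (c (i + k)) (c (i + (k + 1 : ℕ))) := by
    have : (i + k) + 1 = i + ((k + 1 : ℕ) : ℤ) := by push_cast; ring
    rw [Gca, this]
  rw [e1, h1, h2, g]
  have d1 := decompq (show 0 < q by omega)
    (if k = 0 then a else u.getD (k - 1) 0 % p) _ hBk
  have d2 := decompq (show 0 < q by omega)
    (if k + 1 = 0 then a else u.getD (k + 1 - 1) 0 % p) _ hBk1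
  rw [d1.1, d2.2]
  rw [if_neg (Nat.ne_of_lt hk), if_neg (Nat.succ_ne_zero k)]
  simp only [Nat.add_sub_cancel]
  rw [mul_comm (u.getD k 0 / p) p, Nat.div_add_mod]

lemma preimage_subset_vwords {u : List ℕ} (hu : u ≠ []) (hud : ∀ x ∈ u, x < p * q)
    (i : ℤ) {c : ℤ → ℕ} (hc : c ∈ Gca p q ⁻¹' cyl u i) (hgood : ∀ j : ℤ, c j < p * q) :
    ∃ a b : ℕ, a < p ∧ b < q ∧ c ∈ cyl (vword p q u a b) i := by
  have hq0 : 0 < q := by omega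
  have hp0 : 0 < p := by omega
  set n := u.length with hn
  have hn1 : 1 ≤ n := by
    rw [hn]; exact List.length_pos_iff.mpr hu
  rw [Set.mem_preimage, mem_cyl] at hc
  -- the basic relations
  have hrel : ∀ k : ℕ, k < n →
      c (i + k) % q = u.getD k 0 / p ∧ c (i + k + 1) / q = u.getD k 0 % p := by
    intro k hk
    have hgk := hc k hk
    have e1 : Gca p q c (i + k) = g p q (c (i + k)) (c (i + k + 1)) := rfl
    rw [e1, g] at hgk
    have hy : c (i + k + 1) / q < p := div_lt_p hq0 (hgood _)
    have d := decompq hp0 (c (i + k) % q) (c (i + k + 1) / q) hy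
    rw [hgk] at d
    exact ⟨d.2.symm, d.1.symm⟩
  refine ⟨c i / q, c (i + (n : ℕ)) % q, ?_, Nat.mod_lt _ hq0, ?_⟩
  · exact div_lt_p hq0 (hgood i)
  · rw [mem_cyl, vword_length]
    intro k hk
    rw [vword_getD p q u _ _ k (by omega)]
    have hdiv : c (i + k) / q = (if k = 0 then c i / q else u.getD (k - 1) 0 % p) := by
      split
      · next h => subst h; norm_num
      · next h =>
        have hk1 : k - 1 < n := by omega
        have := (hrel (k - 1) hk1).2
        have e : i + ((k - 1 : ℕ) : ℤ) + 1 = i + k := by omega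
        rwa [e] at this
    have hmod : c (i + k) % q = (if k = n then c (i + (n : ℕ)) % q else u.getD k 0 / p) := by
      split
      · next h => subst h; rfl
      · next h => exact (hrel k (by omega)).1
    calc c (i + k) = c (i + k) / q * q + c (i + k) % q := (Nat.div_add_mod' _ _).symm
      _ = _ := by rw [hdiv, hmod]

end Core

section Final

variable {p q : ℕ} (hp : 2 ≤ p) (hq : 2 ≤ q)
variable {μ : Measure (ℤ → ℕ)} [IsProbabilityMeasure μ]
variable (hμ : ∀ (w : List ℕ) (i : ℤ), w ≠ [] → (∀ x ∈ w, x < p * q) →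
      μ (cyl w i) = (((p * q : ℕ) : ENNReal))⁻¹ ^ w.length)

include hp hq

lemma vword_disjoint {u : List ℕ} (hu : u ≠ []) (i : ℤ) {a b a' b' : ℕ}
    (hne : (a, b) ≠ (a', b')) :
    Disjoint (cyl (vword p q u a b) i) (cyl (vword p q u a' b') i) := by
  have hn1 : 1 ≤ u.length := List.length_pos_iff.mpr hu
  rw [Set.disjoint_left]
  intro c h1 h2
  rw [mem_cyl, vword_length] at h1 h2
  have e1 := h1 0 (by omega)
  have e1' := h2 0 (by omega)
  rw [vword_getD p q u a b 0 (by omega), if_pos rfl,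
    if_neg (by omega : ¬ (0 : ℕ) = u.length)] at e1
  rw [vword_getD p q u a' b' 0 (by omega), if_pos rfl,
    if_neg (by omega : ¬ (0 : ℕ) = u.length)] at e1'
  have ea : a * q = a' * q := by omega
  have haa : a = a' := Nat.eq_of_mul_eq_mul_right (by omega) ea
  have e2 := h1 u.length (by omega)
  have e2' := h2 u.length (by omega)
  rw [vword_getD p q u a b u.length (by omega), if_pos rfl,
    if_neg (by omega : ¬ u.length = 0)] at e2
  rw [vword_getD p q u a' b' u.length (by omega), if_pos rfl,
    if_neg (by omega : ¬ u.length = 0)] at e2'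
  have hbb : b = b' := by omega
  exact hne (by rw [haa, hbb])

include hμ

lemma G_preimage_cyl {u : List ℕ} (hu : u ≠ []) (hud : ∀ x ∈ u, x < p * q) (i : ℤ) :
    μ (Gca p q ⁻¹' cyl u i) = (((p * q : ℕ) : ENNReal))⁻¹ ^ u.length := by
  set Bad : Set (ℤ → ℕ) := {c | ∃ j : ℤ, p * q ≤ c j} with hBadDef
  have hBad : μ Bad = 0 := bad_null hp hq hμ
  set S : Finset (ℕ × ℕ) := Finset.range p ×ˢ Finset.range q with hS
  set Y : Set (ℤ → ℕ) := ⋃ ab ∈ S, cyl (vword p q u ab.1 ab.2) i with hY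
  have hmemY : ∀ c : ℤ → ℕ, c ∈ Y ↔
      ∃ ab : ℕ × ℕ, ab ∈ S ∧ c ∈ cyl (vword p q u ab.1 ab.2) i := by
    intro c
    rw [hY]
    simp only [Set.mem_iUnion, exists_prop]
  have hsetdiff : Gca p q ⁻¹' cyl u i \ Bad = Y \ Bad := by
    ext c
    simp only [Set.mem_diff]
    constructor
    · rintro ⟨hcX, hcB⟩
      have hgood : ∀ j : ℤ, c j < p * q := by
        intro j
        by_contra h
        exact hcB ⟨j, by omega⟩
      obtain ⟨a, b, ha, hb, hmem⟩ := preimage_subset_vwords hp hq hu hud i hcX hgood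
      refine ⟨?_, hcB⟩
      refine (hmemY c).mpr ⟨(a, b), ?_, hmem⟩
      rw [hS, Finset.mem_product]
      exact ⟨Finset.mem_range.mpr ha, Finset.mem_range.mpr hb⟩
    · rintro ⟨hcY, hcB⟩
      obtain ⟨ab, hab, hmem⟩ := (hmemY c).mp hcY
      rw [hS, Finset.mem_product] at hab
      exact ⟨cyl_vword_subset hp hq hu hud i (Finset.mem_range.mp hab.1)
        (Finset.mem_range.mp hab.2) hmem, hcB⟩
  have hYmeas : μ Y = ∑ ab ∈ S, μ (cyl (vword p q u ab.1 ab.2) i) := by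
    rw [hY]
    refine measure_biUnion_finset ?_ fun ab _ => measurableSet_cyl _ _
    intro ab hab ab' hab' hne
    exact vword_disjoint hp hq hu i (by simpa using hne)
  have hval : ∀ ab ∈ S, μ (cyl (vword p q u ab.1 ab.2) i) =
      (((p * q : ℕ) : ENNReal))⁻¹ ^ (u.length + 1) := by
    intro ab hab
    simp only [hS, Finset.mem_product, Finset.mem_range] at hab
    rw [hμ _ i ?_ (vword_digits hp hq hud hab.1 hab.2), vword_length]
    have : (vword p q u ab.1 ab.2).length = u.length + 1 := vword_length p q u _ _
    intro hnil
    rw [hnil] at this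
    simp at this
  have h0 : ((p * q : ℕ) : ENNReal) ≠ 0 := by
    simp only [ne_eq, Nat.cast_eq_zero]
    positivity
  have htop : ((p * q : ℕ) : ENNReal) ≠ ⊤ := ENNReal.natCast_ne_top _
  calc μ (Gca p q ⁻¹' cyl u i) = μ (Gca p q ⁻¹' cyl u i \ Bad) :=
        (measure_diff_null hBad).symm
    _ = μ (Y \ Bad) := by rw [hsetdiff]
    _ = μ Y := measure_diff_null hBad
    _ = ∑ ab ∈ S, μ (cyl (vword p q u ab.1 ab.2) i) := hYmeas
    _ = (p * q) • (((p * q : ℕ) : ENNReal))⁻¹ ^ (u.length + 1) := by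
        rw [Finset.sum_congr rfl hval, Finset.sum_const, hS, Finset.card_product,
          Finset.card_range, Finset.card_range]
    _ = (((p * q : ℕ) : ENNReal))⁻¹ ^ u.length := by
        rw [nsmul_eq_mul, pow_succ]
        calc ((p * q : ℕ) : ENNReal) * ((((p * q : ℕ) : ENNReal))⁻¹ ^ u.length *
              (((p * q : ℕ) : ENNReal))⁻¹)
            = (((p * q : ℕ) : ENNReal))⁻¹ ^ u.length *
              (((p * q : ℕ) : ENNReal) * (((p * q : ℕ) : ENNReal))⁻¹) := by
              ring
          _ = (((p * q : ℕ) : ENNReal))⁻¹ ^ u.length := by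
              rw [ENNReal.mul_inv_cancel h0 htop, mul_one]

lemma G_preserves : ∀ S : Set (ℤ → ℕ), MeasurableSet S →
    μ (Gca p q ⁻¹' S) = μ S := by
  have hmeas := measurable_Gca p q
  haveI : IsProbabilityMeasure (μ.map (Gca p q)) :=
    Measure.isProbabilityMeasure_map hmeas.aemeasurable
  have hmap : μ.map (Gca p q) = μ := by
    refine ext_of_generate_finite Cfam generate_eq isPiSystem_Cfam ?_ ?_
    · rintro s ⟨w, i, hw, -, -, rfl⟩
      rw [Measure.map_apply hmeas (measurableSet_cyl w i)]
      by_cases hall : ∀ x ∈ w, x < p * q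
      · rw [G_preimage_cyl hp hq hμ hw hall i, hμ w i hw hall]
      · rw [mu_cyl_val hp hq hμ w i hw, if_neg hall]
        push_neg at hall
        obtain ⟨x, hxw, hx⟩ := hall
        obtain ⟨k, hk, hkx⟩ := List.getElem_of_mem hxw
        refine measure_mono_null ?_ (ge_null hp hq hμ (i + k + 1))
        intro c hc
        rw [Set.mem_preimage, mem_cyl] at hc
        have hgk := hc k hk
        rw [Set.mem_setOf_eq]
        by_contra hlt
        push_neg at hlt
        have hglt := g_lt (p := p) (q := q) (by omega) (by omega)
          (c (i + k)) (c (i + k + 1)) hlt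
        have e : Gca p q c (i + k) = g p q (c (i + k)) (c (i + k + 1)) := rfl
        rw [e] at hgk
        rw [hgk] at hglt
        rw [List.getD_eq_getElem?_getD, List.getElem?_eq_getElem hk] at hglt
        simp only [Option.getD_some] at hglt
        omega
    · rw [Measure.map_apply hmeas MeasurableSet.univ, Set.preimage_univ]
  intro S hS
  rw [← Measure.map_apply hmeas hS, hmap]

lemma shift_preserves : ∀ S : Set (ℤ → ℕ), MeasurableSet S →
    μ (shiftInv ⁻¹' S) = μ S := by
  have hmeas := measurable_shiftInv
  haveI : IsProbabilityMeasure (μ.map shiftInv) :=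
    Measure.isProbabilityMeasure_map hmeas.aemeasurable
  have hmap : μ.map shiftInv = μ := by
    refine ext_of_generate_finite Cfam generate_eq isPiSystem_Cfam ?_ ?_
    · rintro s ⟨w, i, hw, -, -, rfl⟩
      rw [Measure.map_apply hmeas (measurableSet_cyl w i)]
      have hpre : shiftInv ⁻¹' cyl w i = cyl w (i - 1) := by
        ext c
        rw [Set.mem_preimage, mem_cyl, mem_cyl]
        have e : ∀ k : ℕ, i + (k : ℤ) - 1 = (i - 1) + k := by intro k; ring
        constructor
        · intro h k hk
          have := h k hk
          rw [show shiftInv c (i + (k : ℕ)) = c (i + (k : ℕ) - 1) from rfl, e k] at this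
          exact this
        · intro h k hk
          have := h k hk
          rw [show shiftInv c (i + (k : ℕ)) = c (i + (k : ℕ) - 1) from rfl, e k]
          exact this
      rw [hpre, mu_cyl_val hp hq hμ w (i - 1) hw, mu_cyl_val hp hq hμ w i hw]
    · rw [Measure.map_apply hmeas MeasurableSet.univ, Set.preimage_univ]
  intro S hS
  rw [← Measure.map_apply hmeas hS, hmap]

end Final

theorem stmt15 (p q : ℕ) (hp : 2 ≤ p) (hq : 2 ≤ q) (hpq : Nat.Coprime p q)
    (μ : Measure (ℤ → ℕ)) [IsProbabilityMeasure μ]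
    (hμ : ∀ (w : List ℕ) (i : ℤ), w ≠ [] → (∀ x ∈ w, x < p * q) →
      μ (cyl w i) = (((p * q : ℕ) : ENNReal))⁻¹ ^ w.length) :
    ∀ S : Set (ℤ → ℕ), MeasurableSet S → μ (Fca p q ⁻¹' S) = μ S := by
  intro S hS
  have h1 : MeasurableSet (shiftInv ⁻¹' S) := measurable_shiftInv hS
  have h2 : MeasurableSet (Gca p q ⁻¹' (shiftInv ⁻¹' S)) := measurable_Gca p q h1
  have hFeq : Fca p q ⁻¹' S = Gca p q ⁻¹' (Gca p q ⁻¹' (shiftInv ⁻¹' S)) := rfl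
  rw [hFeq, G_preserves hp hq hμ _ h2, G_preserves hp hq hμ _ h1,
    shift_preserves hp hq hμ S hS]
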